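/- Let f_1, f_2 : X → R with f_i^L ≤ f_i(x) ≤ f_i^U, and suppose u_i : X → R satisfies u_i(x) ≤ min{f_i(x), a_i} for constants a_i ∈ [f_i^L, f_i^U] (i = 1,2). Then for all x ∈ X: f_1(x) f_2(x) ≥ (f_2^U − a_2) u_1(x) + (f_1^U − a_1) u_2(x) + a_2 f_1(x) + a_1 f_2(x) + a_1 a_2 − a_1 f_2^U − f_1^U a_2. -/
import Mathlib


theorem stmt17 {X : Type*} (f₁ f₂ u₁ u₂ : X → ℝ)
    (f₁L f₁U f₂L f₂U a₁ a₂ : ℝ)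
    (hb₁ : ∀ x, f₁L ≤ f₁ x ∧ f₁ x ≤ f₁U) (hb₂ : ∀ x, f₂L ≤ f₂ x ∧ f₂ x ≤ f₂U)
    (ha₁ : f₁L ≤ a₁ ∧ a₁ ≤ f₁U) (ha₂ : f₂L ≤ a₂ ∧ a₂ ≤ f₂U)
    (hu₁ : ∀ x, u₁ x ≤ min (f₁ x) a₁) (hu₂ : ∀ x, u₂ x ≤ min (f₂ x) a₂) :
    ∀ x : X,
      (f₂U - a₂) * u₁ x + (f₁U - a₁) * u₂ x + a₂ * f₁ x + a₁ * f₂ x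
        + a₁ * a₂ - a₁ * f₂U - f₁U * a₂ ≤ f₁ x * f₂ x := by
  intro x
  obtain ⟨h1L, h1U⟩ := hb₁ x
  obtain ⟨h2L, h2U⟩ := hb₂ x
  have hu1f := (le_min_iff.mp (hu₁ x)).1
  have hu1a := (le_min_iff.mp (hu₁ x)).2
  have hu2f := (le_min_iff.mp (hu₂ x)).1
  have hu2a := (le_min_iff.mp (hu₂ x)).2
  rcases le_or_gt a₁ (f₁ x) with h1 | h1 <;> rcases le_or_gt a₂ (f₂ x) with h2 | h2 <;>
    nlinarith [mul_nonneg (sub_nonneg.mpr ha₂.2) (sub_nonneg.mpr hu1a),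
      mul_nonneg (sub_nonneg.mpr ha₁.2) (sub_nonneg.mpr hu2a),
      mul_nonneg (sub_nonneg.mpr h1U) (sub_nonneg.mpr hu2a),
      mul_nonneg (sub_nonneg.mpr h2U) (sub_nonneg.mpr hu1a),
      mul_nonneg (sub_nonneg.mpr h1U) (sub_nonneg.mpr hu2f),
      mul_nonneg (sub_nonneg.mpr h2U) (sub_nonneg.mpr hu1f)]
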